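/- For every integer N ≥ 3, Φ(N) = 2 · Σ_m d_{(m+N)/2}((N² − 4 − m²)/4), where the sum ranges over all integers m with m² < N² − 4 and m ≡ N (mod 2). -/

import Mathlib

open Matrix

def A : Matrix (Fin 2) (Fin 2) ℤ := !![1, 0; 1, 1]

def B : Matrix (Fin 2) (Fin 2) ℤ := !![1, 1; 0, 1]

noncomputable def Phi (N : ℤ) : ℕ :=
  {C : Matrix (Fin 2) (Fin 2) ℤ |
    C ∈ Submonoid.closure {A, B} ∧ Matrix.trace C = N}.ncard

/-- `dLt n x` is the number of positive divisors of `x` that are strictly less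
than the real number `n`. -/
noncomputable def dLt (n : ℝ) (x : ℕ) : ℕ :=
  {k : ℕ | k ∣ x ∧ 0 < k ∧ (k : ℝ) < n}.ncard

lemma closure_subset (C : Matrix (Fin 2) (Fin 2) ℤ) (h : C ∈ Submonoid.closure {A, B}) :
    C.det = 1 ∧ ∀ i j, 0 ≤ C i j := by
  induction h using Submonoid.closure_induction with
  | mem x hx =>
    rcases hx with h | h <;> subst h <;>
      refine ⟨by simp [A, B, Matrix.det_fin_two_of], ?_⟩ <;>
      · intro i j; fin_cases i <;> fin_cases j <;> simp [A, B]
  | one => exact ⟨Matrix.det_one, fun i j => by simp [Matrix.one_apply]; positivity⟩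
  | mul x y _ _ hx hy =>
    refine ⟨by rw [Matrix.det_mul, hx.1, hy.1, one_mul], fun i j => ?_⟩
    rw [Matrix.mul_apply]
    exact Finset.sum_nonneg fun k _ => mul_nonneg (hx.2 i k) (hy.2 k j)

lemma key : ∀ n : ℕ, ∀ a b c d : ℤ, 0 ≤ a → 0 ≤ b → 0 ≤ c → 0 ≤ d →
    a * d - b * c = 1 → (a + b + c + d).toNat ≤ n →
    !![a, b; c, d] ∈ Submonoid.closure {A, B} := by
  intro n
  induction n with
  | zero =>
    intro a b c d ha hb hc hd hdet hle
    exfalso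
    have ha0 : a = 0 := by omega
    have hb0 : b = 0 := by omega
    rw [ha0, hb0] at hdet; simp at hdet
  | succ n ih =>
    intro a b c d ha hb hc hd hdet hle
    by_cases h1 : a = 1 ∧ b = 0 ∧ c = 0 ∧ d = 1
    · obtain ⟨rfl, rfl, rfl, rfl⟩ := h1
      rw [← Matrix.one_fin_two]
      exact one_mem _
    by_cases h2 : a ≤ c ∧ b ≤ d
    · have hab : 1 ≤ a + b := by
        by_contra h
        have ha0 : a = 0 := by omega
        have hb0 : b = 0 := by omega
        rw [ha0, hb0] at hdet; simp at hdet
      have hmem := ih a b (c - a) (d - b) ha hb (by omega) (by omega)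
        (by linarith [hdet, mul_comm a d]; ) (by omega)
      have heq : !![a, b; c, d] = A * !![a, b; c - a, d - b] := by
        rw [A, Matrix.mul_fin_two]; congr 1 <;> ring
      rw [heq]
      exact mul_mem (Submonoid.subset_closure (by simp)) hmem
    by_cases h3 : c ≤ a ∧ d ≤ b
    · have hcd : 1 ≤ c + d := by
        by_contra h
        have hc0 : c = 0 := by omega
        have hd0 : d = 0 := by omega
        rw [hc0, hd0] at hdet; simp at hdet
      have hmem := ih (a - c) (b - d) c d (by omega) (by omega) hc hd
        (by linarith [hdet]; ) (by omega)
      have heq : !![a, b; c, d] = B * !![a - c, b - d; c, d] := by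
        rw [B, Matrix.mul_fin_two]; congr 1 <;> ring
      rw [heq]
      exact mul_mem (Submonoid.subset_closure (by simp)) hmem
    · exfalso
      push_neg at h2 h3
      rcases lt_trichotomy a c with hlt | heq | hgt
      · have hdb := h2 hlt.le
        nlinarith
      · have hdb := h2 heq.le
        have hbd := h3 heq.ge
        omega
      · have hbd := h3 hgt.le
        have hb0 : b = 0 := by nlinarith
        have hc0 : c = 0 := by nlinarith
        subst hb0; subst hc0
        simp at hdet
        have ha1 : a = 1 := Int.eq_one_of_mul_eq_one_right ha hdet
        rw [ha1, one_mul] at hdet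
        exact h1 ⟨ha1, rfl, rfl, hdet⟩
lemma closure_iff (C : Matrix (Fin 2) (Fin 2) ℤ) :
    C ∈ Submonoid.closure {A, B} ↔ C.det = 1 ∧ ∀ i j, 0 ≤ C i j := by
  constructor
  · exact closure_subset C
  · rintro ⟨hdet, hnn⟩
    rw [Matrix.eta_fin_two C]
    rw [Matrix.det_fin_two] at hdet
    exact key (C 0 0 + C 0 1 + C 1 0 + C 1 1).toNat _ _ _ _
      (hnn 0 0) (hnn 0 1) (hnn 1 0) (hnn 1 1) hdet le_rfl

def eN (q : ℕ × ℕ × ℕ × ℕ) : Matrix (Fin 2) (Fin 2) ℤ :=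
  !![(q.1 : ℤ), (q.2.1 : ℤ); (q.2.2.1 : ℤ), (q.2.2.2 : ℤ)]

lemma eN_inj : Function.Injective eN := by
  rintro ⟨a, b, c, d⟩ ⟨a', b', c', d'⟩ h
  have h00 := congrFun (congrFun h 0) 0
  have h01 := congrFun (congrFun h 0) 1
  have h10 := congrFun (congrFun h 1) 0
  have h11 := congrFun (congrFun h 1) 1
  simp [eN] at h00 h01 h10 h11
  simp [h00, h01, h10, h11]

def tupleSet (N : ℕ) : Set (ℕ × ℕ × ℕ × ℕ) :=
  {q | q.1 * q.2.2.2 = q.2.1 * q.2.2.1 + 1 ∧ q.1 + q.2.2.2 = N}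

lemma matset_eq (N : ℕ) :
    {C : Matrix (Fin 2) (Fin 2) ℤ |
      C ∈ Submonoid.closure {A, B} ∧ Matrix.trace C = (N : ℤ)} = eN '' tupleSet N := by
  ext C
  simp only [Set.mem_setOf_eq, Set.mem_image, closure_iff]
  constructor
  · rintro ⟨⟨hdet, hnn⟩, htr⟩
    refine ⟨((C 0 0).toNat, (C 0 1).toNat, (C 1 0).toNat, (C 1 1).toNat), ⟨?_, ?_⟩, ?_⟩
    · rw [Matrix.det_fin_two] at hdet
      have h00 := hnn 0 0; have h01 := hnn 0 1; have h10 := hnn 1 0; have h11 := hnn 1 1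
      have : ((((C 0 0).toNat * (C 1 1).toNat : ℕ)) : ℤ) =
          (((C 0 1).toNat * (C 1 0).toNat + 1 : ℕ) : ℤ) := by
        push_cast
        rw [Int.toNat_of_nonneg h00, Int.toNat_of_nonneg h01,
          Int.toNat_of_nonneg h10, Int.toNat_of_nonneg h11]
        linarith
      exact_mod_cast this
    · rw [Matrix.trace_fin_two] at htr
      have h00 := hnn 0 0; have h11 := hnn 1 1
      show (C 0 0).toNat + (C 1 1).toNat = N
      omega
    · rw [Matrix.eta_fin_two C]
      simp [eN, Int.toNat_of_nonneg (hnn 0 0), Int.toNat_of_nonneg (hnn 0 1),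
        Int.toNat_of_nonneg (hnn 1 0), Int.toNat_of_nonneg (hnn 1 1)]
  · rintro ⟨⟨a, b, c, d⟩, ⟨hq1, hq2⟩, rfl⟩
    refine ⟨⟨?_, ?_⟩, ?_⟩
    · rw [eN, Matrix.det_fin_two_of]
      push_cast
      have : (a : ℤ) * d = b * c + 1 := by exact_mod_cast hq1
      linarith
    · intro i j; fin_cases i <;> fin_cases j <;> simp [eN] <;> positivity
    · rw [eN, Matrix.trace_fin_two_of]
      exact_mod_cast congrArg (Nat.cast : ℕ → ℤ) hq2

def tN (N a : ℕ) : ℕ := a * (N - a) - 1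
def SN (N : ℕ) : Finset ℕ := (Finset.Icc 1 (N - 1)).filter (fun a => 2 ≤ a * (N - a))

lemma pair (N a : ℕ) (hN : 3 ≤ N) (ha : a ∈ SN N) :
    ((tN N a).divisors.filter (fun k => ¬ k < a)).card
      = ((tN N a).divisors.filter (fun j => j < N - a)).card := by
  simp only [SN, Finset.mem_filter, Finset.mem_Icc] at ha
  obtain ⟨⟨ha1, haN⟩, hT⟩ := ha
  set t := tN N a with htdef
  have htT : t + 1 = a * (N - a) := by simp only [htdef, tN]; omega
  apply Finset.card_nbij' (i := fun k => t / k) (j := fun k => t / k)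
  · intro k hk
    simp only [Finset.mem_coe, Finset.mem_filter, Nat.mem_divisors, not_lt] at hk ⊢
    obtain ⟨⟨hkd, ht0⟩, hak⟩ := hk
    have hk0 : 0 < k := Nat.pos_of_dvd_of_pos hkd (Nat.pos_of_ne_zero ht0)
    have hmul : t / k * k = t := Nat.div_mul_cancel hkd
    refine ⟨⟨Dvd.intro k hmul, ht0⟩, ?_⟩
    by_contra hcon
    push_neg at hcon
    have : (N - a) * a ≤ t / k * k := Nat.mul_le_mul hcon hak
    rw [hmul, mul_comm] at this
    omega
  · intro j hj
    simp only [Finset.mem_coe, Finset.mem_filter, Nat.mem_divisors, not_lt] at hj ⊢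
    obtain ⟨⟨hjd, ht0⟩, hja⟩ := hj
    have hj0 : 0 < j := Nat.pos_of_dvd_of_pos hjd (Nat.pos_of_ne_zero ht0)
    have hmul : t / j * j = t := Nat.div_mul_cancel hjd
    refine ⟨⟨Dvd.intro j hmul, ht0⟩, ?_⟩
    by_contra hcon
    push_neg at hcon
    have h1 : t / j * j ≤ (a - 1) * (N - a - 1) := Nat.mul_le_mul (by omega) (by omega)
    have h2 : (a - 1) * (N - a - 1) + (N - 1) = a * (N - a) := by
      zify [show 1 ≤ a from ha1, show 1 ≤ N - a by omega, show 1 ≤ N by omega,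
        show a ≤ N by omega]
      ring
    omega
  · intro k hk
    simp only [Finset.mem_coe, Finset.mem_filter, Nat.mem_divisors] at hk
    exact Nat.div_div_self hk.1.1 hk.1.2
  · intro j hj
    simp only [Finset.mem_coe, Finset.mem_filter, Nat.mem_divisors] at hj
    exact Nat.div_div_self hj.1.1 hj.1.2

lemma SN_mem_sub (N a : ℕ) (hN : 3 ≤ N) (ha : a ∈ SN N) : N - a ∈ SN N := by
  simp only [SN, Finset.mem_filter, Finset.mem_Icc] at ha ⊢
  obtain ⟨⟨ha1, haN⟩, hT⟩ := ha
  have h : N - (N - a) = a := by omega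
  rw [h, mul_comm]
  exact ⟨⟨by omega, by omega⟩, hT⟩

lemma tN_sub (N a : ℕ) (ha : a ≤ N) : tN N (N - a) = tN N a := by
  simp only [tN]
  rw [show N - (N - a) = a by omega, mul_comm]

lemma core (N : ℕ) (hN : 3 ≤ N) :
    ∑ a ∈ SN N, (tN N a).divisors.card
      = 2 * ∑ a ∈ SN N, ((tN N a).divisors.filter (fun k => k < a)).card := by
  have hsplit : ∀ a ∈ SN N, (tN N a).divisors.card
      = ((tN N a).divisors.filter (fun k => k < a)).card
        + ((tN N a).divisors.filter (fun k => ¬ k < a)).card :=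
    fun a _ => (Finset.card_filter_add_card_filter_not (fun k => k < a)).symm
  rw [Finset.sum_congr rfl hsplit, Finset.sum_add_distrib]
  have h2 : ∑ a ∈ SN N, ((tN N a).divisors.filter (fun k => ¬ k < a)).card
      = ∑ a ∈ SN N, ((tN N a).divisors.filter (fun k => k < a)).card := by
    rw [Finset.sum_congr rfl (fun a ha => pair N a hN ha)]
    apply Finset.sum_nbij' (i := fun a => N - a) (j := fun a => N - a)
    · exact fun a ha => SN_mem_sub N a hN ha
    · exact fun a ha => SN_mem_sub N a hN ha
    · intro a ha
      simp only [SN, Finset.mem_filter, Finset.mem_Icc] at ha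
      omega
    · intro a ha
      simp only [SN, Finset.mem_filter, Finset.mem_Icc] at ha
      omega
    · intro a ha
      simp only [SN, Finset.mem_filter, Finset.mem_Icc] at ha
      rw [tN_sub N a (by omega)]
  omega
noncomputable def bigF (N : ℕ) : Finset (ℕ × ℕ × ℕ × ℕ) :=
  ((SN N).sigma (fun a => (tN N a).divisors)).image
    (fun q => (q.1, q.2, tN N q.1 / q.2, N - q.1))

lemma tupleSet_eq (N : ℕ) (hN : 3 ≤ N) : tupleSet N = ↑(bigF N) := by
  ext ⟨a, b, c, d⟩
  simp only [tupleSet, Set.mem_setOf_eq, bigF, Finset.coe_image, Set.mem_image,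
    Finset.mem_coe, Finset.mem_sigma, Nat.mem_divisors, SN, Finset.mem_filter,
    Finset.mem_Icc]
  constructor
  · rintro ⟨hdet, htr⟩
    have ha1 : 1 ≤ a := by
      rcases Nat.eq_zero_or_pos a with rfl | h
      · simp at hdet
      · exact h
    have hd1 : 1 ≤ d := by
      rcases Nat.eq_zero_or_pos d with rfl | h
      · rw [mul_zero] at hdet; omega
      · exact h
    have hb1 : 1 ≤ b := by
      rcases Nat.eq_zero_or_pos b with rfl | h
      · rw [zero_mul] at hdet
        have := Nat.eq_one_of_mul_eq_one_right (by omega : a * d = 1)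
        have := Nat.eq_one_of_mul_eq_one_left (by omega : a * d = 1)
        omega
      · exact h
    have hc1 : 1 ≤ c := by
      rcases Nat.eq_zero_or_pos c with rfl | h
      · rw [mul_zero] at hdet
        have := Nat.eq_one_of_mul_eq_one_right (by omega : a * d = 1)
        have := Nat.eq_one_of_mul_eq_one_left (by omega : a * d = 1)
        omega
      · exact h
    have hNa : N - a = d := by omega
    have hTa : a * (N - a) = b * c + 1 := by rw [hNa]; exact hdet
    have htval : tN N a = b * c := by simp only [tN]; omega
    have hbc : 1 ≤ b * c := Nat.mul_pos hb1 hc1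
    refine ⟨⟨a, b⟩, ?_, ?_⟩
    · dsimp only
      exact ⟨⟨⟨ha1, by omega⟩, by omega⟩, by rw [htval]; exact Dvd.intro c rfl, by omega⟩
    · show (a, b, tN N a / b, N - a) = (a, b, c, d)
      rw [htval, Nat.mul_div_cancel_left c (by omega : 0 < b), hNa]
  · rintro ⟨⟨a', k⟩, ⟨⟨⟨ha1, haN⟩, hT⟩, hk, ht0⟩, heq⟩
    dsimp only at ha1 haN hT hk ht0
    have heq' : (a', k, tN N a' / k, N - a') = (a, b, c, d) := heq
    obtain ⟨rfl, rfl, rfl, rfl⟩ : a' = a ∧ k = b ∧ tN N a' / k = c ∧ N - a' = d := by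
      simpa [Prod.ext_iff] using heq'
    have htT : tN N a' + 1 = a' * (N - a') := by simp only [tN]; omega
    have hmul : k * (tN N a' / k) = tN N a' := Nat.mul_div_cancel' hk
    exact ⟨by omega, by omega⟩

lemma bigF_card (N : ℕ) : (bigF N).card = ∑ a ∈ SN N, (tN N a).divisors.card := by
  rw [bigF, Finset.card_image_of_injective _ ?_, Finset.card_sigma]
  rintro ⟨a, k⟩ ⟨a', k'⟩ h
  simp only [Prod.ext_iff] at h
  obtain ⟨h1, h2, -⟩ := h
  subst h1; subst h2; rfl
lemma dLt_eq (a x : ℕ) (hx : x ≠ 0) :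
    dLt (a : ℝ) x = (x.divisors.filter (fun k => k < a)).card := by
  rw [dLt]
  have hset : {k : ℕ | k ∣ x ∧ 0 < k ∧ (k : ℝ) < a}
      = ↑(x.divisors.filter (fun k => k < a)) := by
    ext k
    simp only [Set.mem_setOf_eq, Finset.coe_filter, Nat.mem_divisors, Set.mem_setOf_eq]
    constructor
    · rintro ⟨hd, hk, hlt⟩
      exact ⟨⟨hd, hx⟩, by exact_mod_cast hlt⟩
    · rintro ⟨⟨hd, -⟩, hlt⟩
      exact ⟨hd, Nat.pos_of_dvd_of_pos hd (Nat.pos_of_ne_zero hx), by exact_mod_cast hlt⟩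
  rw [hset, Set.ncard_coe_finset]

lemma rhs_eq (N : ℕ) (hN : 3 ≤ N) :
    ∑ m ∈ (Finset.Ioo (-(N : ℤ)) (N : ℤ)).filter
        (fun m => m ^ 2 < (N : ℤ) ^ 2 - 4 ∧ m % 2 = (N : ℤ) % 2),
      dLt (((m : ℝ) + (N : ℝ)) / 2) (((N : ℤ) ^ 2 - 4 - m ^ 2) / 4).toNat
    = ∑ a ∈ SN N, ((tN N a).divisors.filter (fun k => k < a)).card := by
  apply Finset.sum_nbij' (i := fun m => ((m + (N : ℤ)) / 2).toNat)
    (j := fun a => 2 * (a : ℤ) - (N : ℤ))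
  · intro m hm
    simp only [Finset.mem_filter, Finset.mem_Ioo] at hm
    obtain ⟨⟨hlo, hhi⟩, hsq, hpar⟩ := hm
    set a := ((m + (N : ℤ)) / 2).toNat with hadef
    have ha2 : 2 * (a : ℤ) = m + N := by omega
    simp only [SN, Finset.mem_filter, Finset.mem_Icc]
    refine ⟨⟨by omega, by omega⟩, ?_⟩
    have haN : a ≤ N := by omega
    have hcast : ((N - a : ℕ) : ℤ) = (N : ℤ) - a := by omega
    have : (2 : ℤ) ≤ (a : ℤ) * ((N : ℤ) - (a : ℤ)) := by nlinarith
    have : (2 : ℤ) ≤ ((a * (N - a) : ℕ) : ℤ) := by push_cast [hcast]; linarith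
    exact_mod_cast this
  · intro a ha
    simp only [SN, Finset.mem_filter, Finset.mem_Icc] at ha
    obtain ⟨⟨ha1, haN⟩, hT⟩ := ha
    simp only [Finset.mem_filter, Finset.mem_Ioo]
    have hcast : ((N - a : ℕ) : ℤ) = (N : ℤ) - a := by omega
    have hT' : (2 : ℤ) ≤ (a : ℤ) * ((N : ℤ) - a) := by
      have : (2 : ℤ) ≤ ((a * (N - a) : ℕ) : ℤ) := by exact_mod_cast hT
      push_cast [hcast] at this; linarith
    refine ⟨⟨by omega, by omega⟩, by nlinarith, by omega⟩
  · intro m hm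
    simp only [Finset.mem_filter, Finset.mem_Ioo] at hm
    omega
  · intro a ha
    simp only [SN, Finset.mem_filter, Finset.mem_Icc] at ha
    omega
  · intro m hm
    simp only [Finset.mem_filter, Finset.mem_Ioo] at hm
    obtain ⟨⟨hlo, hhi⟩, hsq, hpar⟩ := hm
    set a := ((m + (N : ℤ)) / 2).toNat with hadef
    have ha2 : 2 * (a : ℤ) = m + N := by omega
    have haN : a ≤ N := by omega
    have hcast : ((N - a : ℕ) : ℤ) = (N : ℤ) - a := by omega
    have hT' : (2 : ℤ) ≤ (a : ℤ) * ((N : ℤ) - (a : ℤ)) := by nlinarith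
    have hT : 2 ≤ a * (N - a) := by
      have : (2 : ℤ) ≤ ((a * (N - a) : ℕ) : ℤ) := by push_cast [hcast]; linarith
      exact_mod_cast this
    have hx : ((N : ℤ) ^ 2 - 4 - m ^ 2) / 4 = ((a * (N - a) : ℕ) : ℤ) - 1 := by
      have h4 : (N : ℤ) ^ 2 - 4 - m ^ 2 = 4 * (((a * (N - a) : ℕ) : ℤ) - 1) := by
        push_cast [hcast]
        nlinarith [ha2]
      rw [h4, Int.mul_ediv_cancel_left _ (by norm_num : (4 : ℤ) ≠ 0)]
    have hxt : (((N : ℤ) ^ 2 - 4 - m ^ 2) / 4).toNat = tN N a := by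
      rw [hx]; simp only [tN]; omega
    have hreal : ((m : ℝ) + (N : ℝ)) / 2 = (a : ℝ) := by
      have h := congrArg (fun z : ℤ => (z : ℝ)) ha2
      push_cast at h
      linarith
    rw [hxt, hreal, dLt_eq a (tN N a) (by simp only [tN]; omega)]

theorem stmt5 (N : ℕ) (hN : 3 ≤ N) :
    Phi (N : ℤ) = 2 * ∑ m ∈ (Finset.Ioo (-(N : ℤ)) (N : ℤ)).filter
        (fun m => m ^ 2 < (N : ℤ) ^ 2 - 4 ∧ m % 2 = (N : ℤ) % 2),
      dLt (((m : ℝ) + (N : ℝ)) / 2) (((N : ℤ) ^ 2 - 4 - m ^ 2) / 4).toNat := by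
  rw [Phi, matset_eq N, Set.ncard_image_of_injective _ eN_inj, tupleSet_eq N hN,
    Set.ncard_coe_finset, bigF_card, core N hN, rhs_eq N hN]
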